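/- Let j be a positive integer, b_{2j}(z) = (2j/π) · conj(z)^{2j-1} / z^{2j+1}, and Q_0 = [-1,1] × [-1,1] ⊂ ℂ. Then p.v. ∫_{Q_0} b_{2j}(w) dw = ∫_{Q_0 \ D(0,1)} b_{2j}(w) dw, and this quantity is nonzero. -/

import Mathlib

open MeasureTheory Filter Complex
open scoped Real

/-- The kernel of the `2j`-th iterate of the Beurling transform. -/
noncomputable def b2j (j : ℕ) (z : ℂ) : ℂ :=
  ((2 * j : ℂ) / Real.pi) * (starRingEnd ℂ z) ^ (2 * j - 1) / z ^ (2 * j + 1)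

noncomputable def eθ (j : ℕ) (θ : ℝ) : ℂ := Complex.exp ((-(4 * (j:ℝ) * θ) : ℝ) * Complex.I)

lemma b2j_polar (j : ℕ) (hj : 0 < j) {r : ℝ} (hr : 0 < r) (θ : ℝ) :
    b2j j (Complex.polarCoord.symm (r, θ)) =
      ((2 * j : ℂ) / Real.pi) * eθ j θ / (r:ℂ) ^ 2 := by
  have hz : Complex.polarCoord.symm (r, θ) = (r:ℂ) * Complex.exp ((θ:ℝ) * Complex.I) := by
    rw [Complex.polarCoord_symm_apply]
    simp [Complex.exp_mul_I]
  have hrc : (r:ℂ) ≠ 0 := by exact_mod_cast hr.ne'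
  have hconj : (starRingEnd ℂ) ((r:ℂ) * Complex.exp ((θ:ℝ) * Complex.I))
      = (r:ℂ) * Complex.exp (-(θ:ℝ) * Complex.I) := by
    rw [map_mul, ← Complex.exp_conj]
    simp
  rw [hz, b2j, hconj, eθ]
  rw [mul_pow, mul_pow, ← Complex.exp_nat_mul, ← Complex.exp_nat_mul]
  rw [div_eq_div_iff (mul_ne_zero (pow_ne_zero _ hrc) (Complex.exp_ne_zero _))
    (pow_ne_zero _ hrc)]
  have h1 : ((2*j-1 : ℕ) : ℂ) = 2*(j:ℂ) - 1 := by
    push_cast [Nat.cast_sub (by omega : 1 ≤ 2*j)]; ring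
  rw [h1]
  push_cast
  have hexp : Complex.exp (-(4*(j:ℂ)*(θ:ℂ))*Complex.I) * Complex.exp ((2*(j:ℂ)+1)*((θ:ℂ)*Complex.I))
      = Complex.exp ((2*(j:ℂ)-1)*(-(θ:ℂ)*Complex.I)) := by
    rw [← Complex.exp_add]; congr 1; ring
  have h2 : (r:ℂ)^(2*j+1) = (r:ℂ)^(2*j-1) * (r:ℂ)^2 := by
    rw [← pow_add]; congr 1; omega
  rw [← hexp, h2]
  ring

/-- summand of the derivative -/
noncomputable def Dterm (m : ℕ) (θ : ℝ) : ℝ :=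
  2 * Real.cos ((4*(m:ℝ)+2)*θ) - Real.cos ((4*(m:ℝ)+4)*θ) - Real.cos ((4*(m:ℝ))*θ)

/-- antiderivative of sin(4jθ) tan θ -/
noncomputable def Pfun (j : ℕ) (θ : ℝ) : ℝ :=
  ∑ m ∈ Finset.range j,
    ((2/(4*(m:ℝ)+2)) * Real.sin ((4*(m:ℝ)+2)*θ)
      - (1/(4*(m:ℝ)+4)) * Real.sin ((4*(m:ℝ)+4)*θ)
      - (if m = 0 then θ else (1/(4*(m:ℝ))) * Real.sin ((4*(m:ℝ))*θ)))

lemma step_identity (x θ : ℝ) :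
    Real.sin θ * (Real.sin (x + 4*θ) - Real.sin x)
      = Real.cos θ * (2*Real.cos (x+2*θ) - Real.cos (x+4*θ) - Real.cos x) := by
  have h1 : Real.sin (x+4*θ) - Real.sin x = 2 * Real.sin (2*θ) * Real.cos (x+2*θ) := by
    rw [Real.sin_sub_sin]; ring_nf
  have h2 : Real.cos (x+4*θ) + Real.cos x = 2 * Real.cos (x+2*θ) * Real.cos (2*θ) := by
    rw [Real.cos_add_cos]; ring_nf
  rw [h1, Real.sin_two_mul]
  have h4 : Real.cos (2*θ) = 2 * Real.cos θ ^ 2 - 1 := Real.cos_two_mul θ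
  have hp := Real.sin_sq_add_cos_sq θ
  linear_combination Real.cos θ * h2 + (2*Real.cos θ*Real.cos (x+2*θ)) * h4
    + (4*Real.cos θ*Real.cos (x+2*θ)) * hp

lemma sum_identity (j : ℕ) (θ : ℝ) :
    Real.sin θ * Real.sin ((4*(j:ℝ))*θ) = Real.cos θ * ∑ m ∈ Finset.range j, Dterm m θ := by
  induction j with
  | zero => simp
  | succ n ih =>
      rw [Finset.sum_range_succ, mul_add, ← ih, Dterm]
      have h := step_identity ((4*(n:ℝ))*θ) θ
      push_cast
      ring_nf
      ring_nf at h ih ⊢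
      linarith [h]

lemma hasDerivAt_sin_mul (k θ : ℝ) :
    HasDerivAt (fun x => Real.sin (k*x)) (k * Real.cos (k*θ)) θ := by
  simpa [mul_comm, Function.comp_def] using (Real.hasDerivAt_sin (k*θ)).comp θ ((hasDerivAt_id θ).const_mul k)

lemma hasDerivAt_sin_mul_div (k θ : ℝ) (hk : k ≠ 0) (c : ℝ) :
    HasDerivAt (fun x => (c/k) * Real.sin (k*x)) (c * Real.cos (k*θ)) θ := by
  have := (hasDerivAt_sin_mul k θ).const_mul (c/k)
  refine this.congr_deriv ?_
  symm
  field_simp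

lemma hasDerivAt_Pfun (j : ℕ) (θ : ℝ) :
    HasDerivAt (Pfun j) (∑ m ∈ Finset.range j, Dterm m θ) θ := by
  apply HasDerivAt.fun_sum
  intro m _
  have h1 := hasDerivAt_sin_mul_div (4*(m:ℝ)+2) θ (by positivity) 2
  have h2 := hasDerivAt_sin_mul_div (4*(m:ℝ)+4) θ (by positivity) 1
  rcases eq_or_ne m 0 with rfl | hm
  · simpa [Dterm, Pi.sub_def] using (h1.sub h2).sub (hasDerivAt_id θ)
  · have hm' : (0:ℝ) < 4*(m:ℝ) := by
      have : (1:ℝ) ≤ (m:ℝ) := by exact_mod_cast Nat.one_le_iff_ne_zero.2 hm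
      linarith
    have h3 := hasDerivAt_sin_mul_div (4*(m:ℝ)) θ hm'.ne' 1
    simpa [Dterm, hm, Pi.sub_def] using (h1.sub h2).sub h3

noncomputable def Ffun (j : ℕ) (θ : ℝ) : ℝ :=
  -(Real.sin ((4*(j:ℝ))*θ) * Real.log (Real.cos θ))/(4*(j:ℝ)) - Pfun j θ/(4*(j:ℝ))

lemma hasDerivAt_Ffun (j : ℕ) (hj : 0 < j) {θ : ℝ} (hθ : 0 < Real.cos θ) :
    HasDerivAt (Ffun j) (-(Real.cos ((4*(j:ℝ))*θ) * Real.log (Real.cos θ))) θ := by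
  have h1 := hasDerivAt_sin_mul (4*(j:ℝ)) θ
  have h2 : HasDerivAt (fun x => Real.log (Real.cos x)) (-Real.sin θ / Real.cos θ) θ := by
    have := (Real.hasDerivAt_log hθ.ne').comp θ (Real.hasDerivAt_cos θ)
    simpa [neg_div, div_eq_inv_mul, mul_comm, Function.comp_def] using this
  have hd := (((h1.mul h2).neg).div_const (4*(j:ℝ))).sub ((hasDerivAt_Pfun j θ).div_const (4*(j:ℝ)))
  refine hd.congr_deriv ?_
  symm
  have hid := sum_identity j θ
  have hj' : (0:ℝ) < (j:ℝ) := by exact_mod_cast hj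
  field_simp
  linear_combination (-1:ℝ) * hid

noncomputable def Mfun (θ : ℝ) : ℝ := max |Real.cos θ| |Real.sin θ|
noncomputable def Lfun (θ : ℝ) : ℝ := -Real.log (Mfun θ)

lemma Mfun_pos (θ : ℝ) : 0 < Mfun θ := by
  by_contra hM
  push_neg at hM
  rw [Mfun, max_le_iff] at hM
  nlinarith [Real.sin_sq_add_cos_sq θ, abs_nonneg (Real.sin θ), abs_nonneg (Real.cos θ),
    _root_.sq_abs (Real.sin θ), _root_.sq_abs (Real.cos θ), hM.1, hM.2]

lemma Mfun_cont : Continuous Mfun :=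
  (Real.continuous_cos.abs).max (Real.continuous_sin.abs)

lemma Lfun_cont : Continuous Lfun := by
  have : Continuous fun θ => Real.log (Mfun θ) := by
    apply continuous_iff_continuousAt.2
    intro θ
    exact (Real.continuousAt_log (Mfun_pos θ).ne').comp Mfun_cont.continuousAt
  exact this.neg

lemma Mfun_even (θ : ℝ) : Mfun (-θ) = Mfun θ := by
  simp [Mfun, Real.cos_neg, Real.sin_neg, abs_neg]

lemma Mfun_periodic : Function.Periodic Mfun (π/2) := by
  intro θ
  simp only [Mfun, Real.cos_add_pi_div_two, Real.sin_add_pi_div_two, abs_neg]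
  exact max_comm _ _

lemma Mfun_eq_cos {θ : ℝ} (h : θ ∈ Set.Icc (-(π/4)) (π/4)) : Mfun θ = Real.cos θ := by
  obtain ⟨h1, h2⟩ := h
  have hpi := Real.pi_pos
  have habs : |θ| ≤ π/4 := abs_le.2 ⟨h1, h2⟩
  have hcos : Real.cos (π/4) ≤ Real.cos θ := by
    rw [← Real.cos_abs θ]
    exact Real.cos_le_cos_of_nonneg_of_le_pi (abs_nonneg θ) (by linarith) habs
  have hsin : |Real.sin θ| ≤ Real.sin (π/4) := by
    rw [abs_le]
    constructor
    · have := Real.sin_le_sin_of_le_of_le_pi_div_two (by linarith : -(π/2) ≤ -(π/4))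
        (by linarith : θ ≤ π/2) h1
      rw [Real.sin_neg] at this; linarith
    · exact Real.sin_le_sin_of_le_of_le_pi_div_two (by linarith) (by linarith) h2
  have hcp : Real.cos (π/4) = Real.sin (π/4) := by
    rw [Real.cos_pi_div_four, Real.sin_pi_div_four]
  have hc0 : 0 ≤ Real.cos θ := le_trans (by rw [Real.cos_pi_div_four]; positivity) hcos
  rw [Mfun, _root_.abs_of_nonneg hc0, max_eq_left]
  calc |Real.sin θ| ≤ Real.sin (π/4) := hsin
    _ = Real.cos (π/4) := hcp.symm
    _ ≤ Real.cos θ := hcos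

noncomputable def Sfun (j : ℕ) : ℝ := ∑ m ∈ Finset.range j, (2/(4*(m:ℝ)+2)) * (-1)^m

lemma Pfun_odd (j : ℕ) (θ : ℝ) : Pfun j (-θ) = -Pfun j θ := by
  rw [Pfun, Pfun, ← Finset.sum_neg_distrib]
  apply Finset.sum_congr rfl
  intro m _
  rcases eq_or_ne m 0 with rfl | hm
  · simp [mul_neg, Real.sin_neg]; ring
  · simp [hm, mul_neg, Real.sin_neg]; ring

lemma cos_nat_pi (m : ℕ) : Real.cos ((m:ℝ)*π) = (-1)^m := by
  simpa using Real.cos_nat_mul_pi_sub 0 m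

lemma sin_4j_pi4 (j : ℕ) : Real.sin ((4*(j:ℝ))*(π/4)) = 0 := by
  have : (4*(j:ℝ))*(π/4) = (j:ℝ)*π := by ring
  rw [this, Real.sin_nat_mul_pi]

lemma Pfun_pi_div_four (j : ℕ) (hj : 0 < j) : Pfun j (π/4) = Sfun j - π/4 := by
  rw [Pfun, Sfun]
  have key : ∀ m ∈ Finset.range j,
      ((2/(4*(m:ℝ)+2)) * Real.sin ((4*(m:ℝ)+2)*(π/4))
      - (1/(4*(m:ℝ)+4)) * Real.sin ((4*(m:ℝ)+4)*(π/4))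
      - (if m = 0 then π/4 else (1/(4*(m:ℝ))) * Real.sin ((4*(m:ℝ))*(π/4))))
      = (2/(4*(m:ℝ)+2)) * (-1)^m - (if m = 0 then π/4 else 0) := by
    intro m _
    have h1 : Real.sin ((4*(m:ℝ)+2)*(π/4)) = (-1)^m := by
      have : (4*(m:ℝ)+2)*(π/4) = (m:ℝ)*π + π/2 := by ring
      rw [this, Real.sin_add_pi_div_two, cos_nat_pi]
    have h2 : Real.sin ((4*(m:ℝ)+4)*(π/4)) = 0 := by
      have : (4*(m:ℝ)+4)*(π/4) = ((m+1 : ℕ):ℝ)*π := by push_cast; ring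
      rw [this, Real.sin_nat_mul_pi]
    have h3 : Real.sin ((4*(m:ℝ))*(π/4)) = 0 := by
      have : (4*(m:ℝ))*(π/4) = ((m:ℕ):ℝ)*π := by push_cast; ring
      rw [this, Real.sin_nat_mul_pi]
    rw [h1, h2, h3]
    rcases eq_or_ne m 0 with rfl | hm
    · norm_num
    · simp [hm]
  rw [Finset.sum_congr rfl key, Finset.sum_sub_distrib]
  congr 1
  rw [Finset.sum_ite_eq' (Finset.range j) 0 (fun _ => π/4)]
  simp [Finset.mem_range, hj]

lemma cos_pos_quarter {x : ℝ} (hx : x ∈ Set.Icc (-(π/4)) (π/4)) : 0 < Real.cos x := by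
  have hpi := Real.pi_pos
  exact Real.cos_pos_of_mem_Ioo ⟨by linarith [hx.1], by linarith [hx.2]⟩

lemma integral_quarter (j : ℕ) (hj : 0 < j) :
    ∫ θ in (-(π/4))..(π/4), (-(Real.cos ((4*(j:ℝ))*θ) * Real.log (Real.cos θ)))
      = (π/4 - Sfun j) / (2*(j:ℝ)) := by
  have hpi := Real.pi_pos
  have huIcc : Set.uIcc (-(π/4)) (π/4) = Set.Icc (-(π/4)) (π/4) :=
    Set.uIcc_of_le (by linarith)
  have hd : ∀ x ∈ Set.uIcc (-(π/4)) (π/4),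
      HasDerivAt (Ffun j) (-(Real.cos ((4*(j:ℝ))*x) * Real.log (Real.cos x))) x := by
    intro x hx
    rw [huIcc] at hx
    exact hasDerivAt_Ffun j hj (cos_pos_quarter hx)
  have hci : IntervalIntegrable
      (fun θ => -(Real.cos ((4*(j:ℝ))*θ) * Real.log (Real.cos θ))) volume (-(π/4)) (π/4) := by
    apply ContinuousOn.intervalIntegrable
    rw [huIcc]
    apply ContinuousOn.neg
    apply ContinuousOn.mul
    · exact (Real.continuous_cos.comp (continuous_const.mul continuous_id)).continuousOn
    · intro x hx
      exact ((Real.continuousAt_log (cos_pos_quarter hx).ne').comp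
        Real.continuous_cos.continuousAt).continuousWithinAt
  rw [intervalIntegral.integral_eq_sub_of_hasDerivAt hd hci]
  have h1 : Ffun j (π/4) = -Pfun j (π/4)/(4*(j:ℝ)) := by
    rw [Ffun, sin_4j_pi4]; ring
  have h2 : Ffun j (-(π/4)) = Pfun j (π/4)/(4*(j:ℝ)) := by
    rw [Ffun]
    have : (4*(j:ℝ))*(-(π/4)) = -((4*(j:ℝ))*(π/4)) := by ring
    rw [this, Real.sin_neg, sin_4j_pi4, Pfun_odd]
    ring
  rw [h1, h2, Pfun_pi_div_four j hj]
  have hj' : (0:ℝ) < (j:ℝ) := by exact_mod_cast hj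
  field_simp
  ring

lemma g_periodic (j : ℕ) :
    Function.Periodic (fun θ => Real.cos ((4*(j:ℝ))*θ) * Lfun θ) (π/2) := by
  intro θ
  have h1 : (4*(j:ℝ))*(θ + π/2) = (4*(j:ℝ))*θ + (j:ℕ)*(2*π) := by push_cast; ring
  simp only [h1, Real.cos_add_nat_mul_two_pi, Lfun, Mfun_periodic θ]

lemma g_cont (j : ℕ) : Continuous (fun θ => Real.cos ((4*(j:ℝ))*θ) * Lfun θ) :=
  (Real.continuous_cos.comp (continuous_const.mul continuous_id)).mul Lfun_cont

lemma integral_full (j : ℕ) (hj : 0 < j) :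
    ∫ θ in (-π)..π, Real.cos ((4*(j:ℝ))*θ) * Lfun θ
      = 4 * ((π/4 - Sfun j) / (2*(j:ℝ))) := by
  have hpi := Real.pi_pos
  set g : ℝ → ℝ := fun θ => Real.cos ((4*(j:ℝ))*θ) * Lfun θ with hg
  have hii : ∀ a b : ℝ, IntervalIntegrable g volume a b :=
    fun a b => (g_cont j).intervalIntegrable a b
  have hper := g_periodic j
  have quarter : ∫ x in (-(π/4))..(π/4), g x = (π/4 - Sfun j) / (2*(j:ℝ)) := by
    rw [← integral_quarter j hj]
    apply intervalIntegral.integral_congr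
    intro x hx
    rw [Set.uIcc_of_le (by linarith)] at hx
    simp only [hg, Lfun, Mfun_eq_cos hx]
    ring
  have e1 : ∫ x in (-π)..(-(π/2)), g x = ∫ x in (-(π/4))..(π/4), g x := by
    have h := hper.intervalIntegral_add_eq (-π) (-(π/4))
    rw [show (-π) + π/2 = -(π/2) by ring, show (-(π/4)) + π/2 = π/4 by ring] at h
    exact h
  have e2 : ∫ x in (-(π/2))..(0:ℝ), g x = ∫ x in (-(π/4))..(π/4), g x := by
    have h := hper.intervalIntegral_add_eq (-(π/2)) (-(π/4))
    rw [show (-(π/2)) + π/2 = (0:ℝ) by ring, show (-(π/4)) + π/2 = π/4 by ring] at h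
    exact h
  have e3 : ∫ x in (0:ℝ)..(π/2), g x = ∫ x in (-(π/4))..(π/4), g x := by
    have h := hper.intervalIntegral_add_eq 0 (-(π/4))
    rw [show (0:ℝ) + π/2 = π/2 by ring, show (-(π/4)) + π/2 = π/4 by ring] at h
    exact h
  have e4 : ∫ x in (π/2)..π, g x = ∫ x in (-(π/4))..(π/4), g x := by
    have h := hper.intervalIntegral_add_eq (π/2) (-(π/4))
    rw [show (π/2) + π/2 = π by ring, show (-(π/4)) + π/2 = π/4 by ring] at h
    exact h
  rw [← intervalIntegral.integral_add_adjacent_intervals (hii (-π) (-(π/2))) (hii (-(π/2)) π),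
      ← intervalIntegral.integral_add_adjacent_intervals (hii (-(π/2)) 0) (hii 0 π),
      ← intervalIntegral.integral_add_adjacent_intervals (hii 0 (π/2)) (hii (π/2) π),
      e1, e2, e3, e4, quarter]
  ring

lemma integral_odd_zero (j : ℕ) :
    ∫ θ in (-π)..π, Real.sin ((4*(j:ℝ))*θ) * Lfun θ = 0 := by
  set h : ℝ → ℝ := fun θ => Real.sin ((4*(j:ℝ))*θ) * Lfun θ with hh
  have hcont : Continuous h :=
    (Real.continuous_sin.comp (continuous_const.mul continuous_id)).mul Lfun_cont
  have hii : ∀ a b : ℝ, IntervalIntegrable h volume a b :=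
    fun a b => hcont.intervalIntegrable a b
  have hodd : ∀ x, h (-x) = -h x := by
    intro x
    simp only [hh, Lfun, mul_neg, Real.sin_neg, Mfun_even]
    ring
  have key : ∫ x in (-π)..(0:ℝ), h x = -∫ x in (0:ℝ)..π, h x := by
    have := intervalIntegral.integral_comp_neg (a := (0:ℝ)) (b := π) h
    simp only [neg_zero] at this
    rw [← this]
    rw [intervalIntegral.integral_congr (g := fun x => -h x) (by intro x _; exact hodd x)]
    rw [intervalIntegral.integral_neg]
  rw [← intervalIntegral.integral_add_adjacent_intervals (hii (-π) 0) (hii 0 π), key]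
  ring

lemma b2j_norm (j : ℕ) (hj : 0 < j) {z : ℂ} (hz : z ≠ 0) :
    ‖b2j j z‖ = (2*j/π) / ‖z‖ ^ 2 := by
  have ha : ‖z‖ ≠ 0 := by simpa using hz
  rw [b2j]
  rw [norm_div, norm_mul, norm_pow, norm_pow]
  simp only [Complex.norm_conj]
  have h1 : ‖2 * (j:ℂ) / (Real.pi:ℂ)‖ = 2*(j:ℝ)/π := by
    rw [norm_div, norm_mul]
    simp [abs_of_pos Real.pi_pos]
  rw [h1]
  rw [div_eq_div_iff (pow_ne_zero _ ha) (pow_ne_zero _ ha), mul_assoc, ← pow_add]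
  congr 2
  omega

lemma continuousOn_b2j (j : ℕ) : ContinuousOn (b2j j) {z : ℂ | z ≠ 0} := by
  apply ContinuousOn.div
  · exact (continuous_const.mul (Complex.continuous_conj.pow _)).continuousOn
  · exact (continuous_pow _).continuousOn
  · intro z hz
    exact pow_ne_zero _ hz

lemma integrableOn_b2j_compact (j : ℕ) {S : Set ℂ} (hSc : IsCompact S) (h0 : (0:ℂ) ∉ S) :
    IntegrableOn (b2j j) S volume := by
  apply ContinuousOn.integrableOn_compact hSc
  apply (continuousOn_b2j j).mono
  intro z hz
  simp only [Set.mem_setOf_eq]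
  rintro rfl; exact h0 hz

lemma measurable_b2j (j : ℕ) : Measurable (b2j j) := by
  unfold b2j
  exact (measurable_const.mul (Complex.continuous_conj.measurable.pow_const _)).div
    (measurable_id.pow_const _)

noncomputable def φmap (p : ℝ × ℝ) : ℂ := (p.1 : ℂ) * (Real.cos p.2 + Real.sin p.2 * Complex.I)

lemma φmap_eq (p : ℝ × ℝ) : Complex.polarCoord.symm p = φmap p :=
  Complex.polarCoord_symm_apply p

lemma φmap_cont : Continuous φmap := by
  unfold φmap
  fun_prop

lemma key_integrable (j : ℕ) (hj : 0 < j) {S : Set ℂ} (hS : MeasurableSet S) {ε : ℝ}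
    (hε : 0 < ε) (hSsub : ∀ z ∈ S, ε ≤ ‖z‖ ∧ ‖z‖ ≤ 2) :
    Integrable (fun p : ℝ × ℝ => p.1 • (S.indicator (b2j j) (Complex.polarCoord.symm p)))
      ((volume.restrict (Set.Ioi 0)).prod (volume.restrict (Set.Ioo (-π) π))) := by
  have hmeas : Measurable (fun p : ℝ × ℝ => p.1 • (S.indicator (b2j j) (Complex.polarCoord.symm p))) := by
    simp only [φmap_eq]
    exact measurable_fst.smul (((measurable_b2j j).indicator hS).comp φmap_cont.measurable)
  set C : ℝ := (2*j/π)/ε with hC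
  have hC0 : 0 ≤ C := by
    have := Real.pi_pos
    positivity
  set B : Set (ℝ × ℝ) := Set.Icc ε 2 ×ˢ (Set.univ : Set ℝ) with hB
  have hBmeas : MeasurableSet B := measurableSet_Icc.prod MeasurableSet.univ
  have hGmeas : MeasurableSet ((Set.Ioi (0:ℝ)) ×ˢ (Set.Ioo (-π) π)) :=
    measurableSet_Ioi.prod measurableSet_Ioo
  apply Integrable.mono' (g := B.indicator (fun _ => C))
  · rw [integrable_indicator_iff hBmeas]
    refine (integrableOn_const_iff (C := C) (by simp)).2 ?_
    right
    rw [hB, Measure.prod_prod]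
    apply ENNReal.mul_lt_top
    · rw [Measure.restrict_apply measurableSet_Icc]
      exact lt_of_le_of_lt (measure_mono Set.inter_subset_left) measure_Icc_lt_top
    · rw [Measure.restrict_apply MeasurableSet.univ, Set.univ_inter]
      exact measure_Ioo_lt_top
  · exact hmeas.aestronglyMeasurable
  · rw [Measure.prod_restrict]
    filter_upwards [ae_restrict_mem hGmeas] with p hp
    obtain ⟨hp1, _⟩ := hp
    by_cases hmem : Complex.polarCoord.symm p ∈ S
    · have habs : ‖Complex.polarCoord.symm p‖ = p.1 := by
        rw [Complex.norm_polarCoord_symm, abs_of_pos hp1]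
      obtain ⟨h1, h2⟩ := hSsub _ hmem
      rw [habs] at h1 h2
      have hz0 : Complex.polarCoord.symm p ≠ 0 := by
        intro h; rw [h] at habs; simp at habs; linarith [habs ▸ hp1]
      have : ‖p.1 • S.indicator (b2j j) (Complex.polarCoord.symm p)‖
          = p.1 * ((2*j/π) / p.1 ^ 2) := by
        rw [Set.indicator_of_mem hmem, norm_smul, Real.norm_eq_abs, abs_of_pos hp1,
          b2j_norm j hj hz0, habs]
      rw [this, Set.indicator_of_mem (by exact ⟨⟨h1, h2⟩, trivial⟩)]
      rw [hC]
      have hπ := Real.pi_pos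
      have hp0 : (0:ℝ) < p.1 := hp1
      have heq : p.1 * (2*↑j/π / p.1^2) = (2*↑j/π) / p.1 := by
        field_simp
      rw [heq]
      exact div_le_div_of_nonneg_left (by positivity) hε h1
    · simp only [Set.indicator_of_notMem hmem, smul_zero, norm_zero]
      exact Set.indicator_nonneg (fun _ _ => hC0) p

lemma Mfun_le_one (θ : ℝ) : Mfun θ ≤ 1 :=
  max_le (Real.abs_cos_le_one θ) (Real.abs_sin_le_one θ)

lemma sin_four_j_pi (j : ℕ) : Real.sin ((4*(j:ℝ))*π) = 0 := by
  have : (4*(j:ℝ))*π = ((4*j : ℕ):ℝ)*π := by push_cast; ring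
  rw [this, Real.sin_nat_mul_pi]

lemma intervalIntegral_cos_mul (j : ℕ) (hj : 0 < j) :
    ∫ θ in (-π)..π, Real.cos ((4*(j:ℝ))*θ) = 0 := by
  have hc : (4*(j:ℝ)) ≠ 0 := by positivity
  rw [intervalIntegral.integral_comp_mul_left (fun x => Real.cos x) hc]
  rw [integral_cos]
  rw [show (4*(j:ℝ))*(-π) = -((4*(j:ℝ))*π) by ring, Real.sin_neg, sin_four_j_pi]
  simp

lemma intervalIntegral_sin_mul (j : ℕ) (hj : 0 < j) :
    ∫ θ in (-π)..π, Real.sin ((4*(j:ℝ))*θ) = 0 := by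
  have hc : (4*(j:ℝ)) ≠ 0 := by positivity
  rw [intervalIntegral.integral_comp_mul_left (fun x => Real.sin x) hc]
  rw [integral_sin]
  rw [show (4*(j:ℝ))*(-π) = -((4*(j:ℝ))*π) by ring, Real.cos_neg]
  simp

lemma eθ_decomp (j : ℕ) (θ : ℝ) :
    eθ j θ = ((Real.cos ((4*(j:ℝ))*θ) : ℝ) : ℂ) - ((Real.sin ((4*(j:ℝ))*θ) : ℝ) : ℂ) * Complex.I := by
  rw [eθ, Complex.exp_mul_I, ← Complex.ofReal_cos, ← Complex.ofReal_sin,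
    Real.cos_neg, Real.sin_neg]
  push_cast
  ring

lemma Zθ (j : ℕ) (hj : 0 < j) : ∫ θ in Set.Ioo (-π) π, eθ j θ = 0 := by
  have hle : -π ≤ π := by linarith [Real.pi_pos]
  rw [← MeasureTheory.integral_Ioc_eq_integral_Ioo, ← intervalIntegral.integral_of_le hle]
  simp_rw [eθ_decomp j]
  rw [intervalIntegral.integral_sub]
  · rw [intervalIntegral.integral_mul_const, intervalIntegral.integral_ofReal,
      intervalIntegral.integral_ofReal, intervalIntegral_cos_mul j hj,
      intervalIntegral_sin_mul j hj]
    simp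
  · apply Continuous.intervalIntegrable
    exact Complex.continuous_ofReal.comp (Real.continuous_cos.comp (by fun_prop))
  · apply Continuous.intervalIntegrable
    exact (Complex.continuous_ofReal.comp (Real.continuous_sin.comp (by fun_prop))).mul
      continuous_const

lemma Kθ (j : ℕ) (hj : 0 < j) :
    ∫ θ in Set.Ioo (-π) π, eθ j θ * ((Lfun θ : ℝ) : ℂ)
      = ((4 * ((π/4 - Sfun j) / (2*(j:ℝ))) : ℝ) : ℂ) := by
  have hle : -π ≤ π := by linarith [Real.pi_pos]
  rw [← MeasureTheory.integral_Ioc_eq_integral_Ioo, ← intervalIntegral.integral_of_le hle]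
  have hdecomp : ∀ θ : ℝ, eθ j θ * ((Lfun θ : ℝ) : ℂ)
      = ((Real.cos ((4*(j:ℝ))*θ) * Lfun θ : ℝ) : ℂ)
        - ((Real.sin ((4*(j:ℝ))*θ) * Lfun θ : ℝ) : ℂ) * Complex.I := by
    intro θ
    rw [eθ_decomp j]
    push_cast
    ring
  simp_rw [hdecomp]
  rw [intervalIntegral.integral_sub]
  · rw [intervalIntegral.integral_mul_const, intervalIntegral.integral_ofReal,
      intervalIntegral.integral_ofReal, integral_full j hj, integral_odd_zero j]
    simp
  · apply Continuous.intervalIntegrable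
    exact Complex.continuous_ofReal.comp
      ((Real.continuous_cos.comp (by fun_prop)).mul Lfun_cont)
  · apply Continuous.intervalIntegrable
    exact (Complex.continuous_ofReal.comp
      ((Real.continuous_sin.comp (by fun_prop)).mul Lfun_cont)).mul continuous_const

lemma abs_symm {r : ℝ} (hr : 0 < r) (θ : ℝ) :
    ‖Complex.polarCoord.symm (r, θ)‖ = r := by
  rw [Complex.norm_polarCoord_symm]
  exact abs_of_pos hr

lemma re_symm (r θ : ℝ) : (Complex.polarCoord.symm (r, θ)).re = r * Real.cos θ := by
  rw [Complex.polarCoord_symm_apply]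
  simp [Complex.cos_ofReal_re]

lemma im_symm (r θ : ℝ) : (Complex.polarCoord.symm (r, θ)).im = r * Real.sin θ := by
  rw [Complex.polarCoord_symm_apply]
  simp [Complex.sin_ofReal_re]

lemma mem_annulus_iff {ε : ℝ} {r : ℝ} (hr : 0 < r) (θ : ℝ) :
    Complex.polarCoord.symm (r, θ) ∈ Metric.ball (0:ℂ) 1 \ Metric.ball (0:ℂ) ε
      ↔ ε ≤ r ∧ r < 1 := by
  simp only [Set.mem_diff, Metric.mem_ball, dist_zero_right,
    abs_symm hr, not_lt]
  tauto

lemma mem_Q0_diff_iff {Q0 : Set ℂ} (hQ0 : Q0 = {w : ℂ | |w.re| ≤ 1 ∧ |w.im| ≤ 1})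
    {r : ℝ} (hr : 0 < r) (θ : ℝ) :
    Complex.polarCoord.symm (r, θ) ∈ Q0 \ Metric.ball (0:ℂ) 1
      ↔ r ∈ Set.Icc 1 (Mfun θ)⁻¹ := by
  have hM := Mfun_pos θ
  rw [hQ0]
  simp only [Set.mem_diff, Set.mem_setOf_eq, Metric.mem_ball, dist_zero_right,
    abs_symm hr, not_lt, re_symm, im_symm, Set.mem_Icc]
  rw [abs_mul, abs_mul, abs_of_pos hr]
  have hmax : r * Mfun θ = max (r * |Real.cos θ|) (r * |Real.sin θ|) := by
    rw [Mfun]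
    exact mul_max_of_nonneg _ _ hr.le
  constructor
  · rintro ⟨⟨h1, h2⟩, h3⟩
    refine ⟨h3, ?_⟩
    rw [← one_div, le_div_iff₀ hM, hmax]
    exact max_le h1 h2
  · rintro ⟨h1, h2⟩
    rw [← one_div, le_div_iff₀ hM, hmax] at h2
    exact ⟨⟨le_trans (le_max_left _ _) h2, le_trans (le_max_right _ _) h2⟩, h1⟩

lemma annulus_zero (j : ℕ) (hj : 0 < j) {ε : ℝ} (hε : 0 < ε) (hε1 : ε ≤ 1) :
    ∫ w in Metric.ball (0:ℂ) 1 \ Metric.ball (0:ℂ) ε, b2j j w = 0 := by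
  set S : Set ℂ := Metric.ball (0:ℂ) 1 \ Metric.ball (0:ℂ) ε with hSdef
  have hS : MeasurableSet S := (Metric.isOpen_ball.measurableSet).diff Metric.isOpen_ball.measurableSet
  have hSsub : ∀ z ∈ S, ε ≤ ‖z‖ ∧ ‖z‖ ≤ 2 := by
    rintro z ⟨hz1, hz2⟩
    rw [Metric.mem_ball, dist_zero_right] at hz1
    rw [Metric.mem_ball, dist_zero_right, not_lt] at hz2
    exact ⟨hz2, by linarith⟩
  rw [← MeasureTheory.integral_indicator hS, ← Complex.integral_comp_polarCoord_symm,
    (show polarCoord.target = Set.Ioi (0:ℝ) ×ˢ Set.Ioo (-π) π from rfl), Measure.volume_eq_prod, ← Measure.prod_restrict,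
    MeasureTheory.integral_prod _ (key_integrable j hj hS hε hSsub)]
  rw [MeasureTheory.setIntegral_congr_fun (measurableSet_Ioi)
    (g := fun _ => (0:ℂ)) ?_]
  · simp
  intro r hr
  have hr0 : (0:ℝ) < r := hr
  have hmem : ∀ θ : ℝ, S.indicator (b2j j) (Complex.polarCoord.symm (r, θ))
      = if ε ≤ r ∧ r < 1 then ((2 * j : ℂ) / Real.pi) * eθ j θ / (r:ℂ) ^ 2 else 0 := by
    intro θ
    by_cases h : ε ≤ r ∧ r < 1
    · rw [if_pos h, Set.indicator_of_mem ((mem_annulus_iff hr0 θ).2 h), b2j_polar j hj hr0]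
    · rw [if_neg h, Set.indicator_of_notMem (fun hc => h ((mem_annulus_iff hr0 θ).1 hc))]
  by_cases h : ε ≤ r ∧ r < 1
  · have : (fun θ => r • S.indicator (b2j j) (Complex.polarCoord.symm (r, θ)))
        = fun θ => ((r:ℂ) * (((2 * j : ℂ) / Real.pi) / (r:ℂ)^2)) * eθ j θ := by
      funext θ
      rw [hmem θ, if_pos h, Complex.real_smul]
      ring
    show (∫ θ in Set.Ioo (-π) π, r • S.indicator (b2j j) (Complex.polarCoord.symm (r, θ))) = 0
    rw [this, MeasureTheory.integral_const_mul, Zθ j hj, mul_zero]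
  · have : (fun θ => r • S.indicator (b2j j) (Complex.polarCoord.symm (r, θ)))
        = fun _ => (0:ℂ) := by
      funext θ
      rw [hmem θ, if_neg h, smul_zero]
    show (∫ θ in Set.Ioo (-π) π, r • S.indicator (b2j j) (Complex.polarCoord.symm (r, θ))) = 0
    rw [this, MeasureTheory.integral_zero]

lemma main_value (j : ℕ) (hj : 0 < j) (Q0 : Set ℂ)
    (hQ0 : Q0 = {w : ℂ | |w.re| ≤ 1 ∧ |w.im| ≤ 1}) :
    ∫ w in Q0 \ Metric.ball 0 1, b2j j w
      = ((2 * j : ℂ) / Real.pi) * ((4 * ((π/4 - Sfun j) / (2*(j:ℝ))) : ℝ) : ℂ) := by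
  have hQ0closed : IsClosed Q0 := by
    rw [hQ0]
    have : {w : ℂ | |w.re| ≤ 1 ∧ |w.im| ≤ 1}
        = (fun w : ℂ => |w.re|) ⁻¹' (Set.Iic 1) ∩ (fun w : ℂ => |w.im|) ⁻¹' (Set.Iic 1) := by
      ext w; simp [Set.mem_setOf_eq]
    rw [this]
    exact (isClosed_Iic.preimage (Complex.continuous_re.abs)).inter
      (isClosed_Iic.preimage (Complex.continuous_im.abs))
  set S : Set ℂ := Q0 \ Metric.ball 0 1 with hSdef
  have hS : MeasurableSet S := hQ0closed.measurableSet.diff Metric.isOpen_ball.measurableSet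
  have hSsub : ∀ z ∈ S, 1 ≤ ‖z‖ ∧ ‖z‖ ≤ 2 := by
    rintro z ⟨hz1, hz2⟩
    rw [Metric.mem_ball, dist_zero_right, not_lt] at hz2
    refine ⟨hz2, ?_⟩
    rw [hQ0] at hz1
    calc ‖z‖ ≤ |z.re| + |z.im| := Complex.norm_le_abs_re_add_abs_im z
      _ ≤ 2 := by linarith [hz1.1, hz1.2]
  rw [← MeasureTheory.integral_indicator hS, ← Complex.integral_comp_polarCoord_symm,
    (show polarCoord.target = Set.Ioi (0:ℝ) ×ˢ Set.Ioo (-π) π from rfl),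
    Measure.volume_eq_prod, ← Measure.prod_restrict,
    MeasureTheory.integral_prod_symm _ (key_integrable j hj hS one_pos hSsub)]
  have inner_eq : ∀ θ : ℝ, (∫ r in Set.Ioi (0:ℝ),
      r • S.indicator (b2j j) (Complex.polarCoord.symm (r, θ)))
      = ((2 * j : ℂ) / Real.pi) * (eθ j θ * ((Lfun θ : ℝ) : ℂ)) := by
    intro θ
    have hM := Mfun_pos θ
    have hMinv : (1:ℝ) ≤ (Mfun θ)⁻¹ := by
      rw [le_inv_comm₀ one_pos hM]
      simpa using Mfun_le_one θ
    rw [MeasureTheory.setIntegral_congr_fun (measurableSet_Ioi)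
      (g := (Set.Icc (1:ℝ) (Mfun θ)⁻¹).indicator
        (fun s => ((2 * j : ℂ) / Real.pi) * eθ j θ * (((s⁻¹ : ℝ)) : ℂ))) ?_]
    · rw [MeasureTheory.integral_indicator measurableSet_Icc,
        Measure.restrict_restrict measurableSet_Icc]
      have hinter : Set.Icc (1:ℝ) (Mfun θ)⁻¹ ∩ Set.Ioi 0 = Set.Icc (1:ℝ) (Mfun θ)⁻¹ := by
        apply Set.inter_eq_left.2
        intro x hx
        exact lt_of_lt_of_le one_pos hx.1
      rw [hinter, MeasureTheory.integral_const_mul]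
      have hcast : (∫ a in Set.Icc (1:ℝ) (Mfun θ)⁻¹, ((a⁻¹ : ℝ) : ℂ))
          = ((∫ a in Set.Icc (1:ℝ) (Mfun θ)⁻¹, a⁻¹ : ℝ) : ℂ) := integral_ofReal
      rw [hcast]
      have hlog : (∫ s in Set.Icc (1:ℝ) (Mfun θ)⁻¹, s⁻¹) = Lfun θ := by
        rw [MeasureTheory.integral_Icc_eq_integral_Ioc,
          ← intervalIntegral.integral_of_le hMinv,
          integral_inv_of_pos one_pos (inv_pos.2 hM), div_one, Real.log_inv]
        rfl
      rw [hlog, mul_assoc]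
    · intro r hr
      have hr0 : (0:ℝ) < r := hr
      have hrc : (r:ℂ) ≠ 0 := by exact_mod_cast hr0.ne'
      simp only [hSdef]
      by_cases h : r ∈ Set.Icc (1:ℝ) (Mfun θ)⁻¹
      · rw [Set.indicator_of_mem ((mem_Q0_diff_iff hQ0 hr0 θ).2 h),
          Set.indicator_of_mem h, b2j_polar j hj hr0, Complex.real_smul,
          Complex.ofReal_inv]
        have hrr : (r:ℂ) * ((r:ℂ))⁻¹ = 1 := mul_inv_cancel₀ hrc
        field_simp
      · rw [Set.indicator_of_notMem (fun hc => h ((mem_Q0_diff_iff hQ0 hr0 θ).1 hc)),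
          Set.indicator_of_notMem h, smul_zero]
  have : (fun θ => ∫ r in Set.Ioi (0:ℝ),
      r • S.indicator (b2j j) (Complex.polarCoord.symm (r, θ)))
      = fun θ => ((2 * j : ℂ) / Real.pi) * (eθ j θ * ((Lfun θ : ℝ) : ℂ)) :=
    funext inner_eq
  rw [this, MeasureTheory.integral_const_mul, Kθ j hj]

theorem pv_integral_b2j_Q0 (j : ℕ) (hj : 0 < j)
    (Q0 : Set ℂ) (hQ0 : Q0 = {w : ℂ | |w.re| ≤ 1 ∧ |w.im| ≤ 1}) :
    Tendsto (fun ε : ℝ => ∫ w in Q0 \ Metric.ball 0 ε, b2j j w ∂volume)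
        (nhdsWithin 0 (Set.Ioi 0))
        (nhds (∫ w in Q0 \ Metric.ball 0 1, b2j j w ∂volume)) ∧
      (∫ w in Q0 \ Metric.ball 0 1, b2j j w ∂volume) ≠ 0 := by
  have hπ := Real.pi_pos
  have hj' : (0:ℝ) < (j:ℝ) := by exact_mod_cast hj
  have hQ0closed : IsClosed Q0 := by
    rw [hQ0]
    have : {w : ℂ | |w.re| ≤ 1 ∧ |w.im| ≤ 1}
        = (fun w : ℂ => |w.re|) ⁻¹' (Set.Iic 1) ∩ (fun w : ℂ => |w.im|) ⁻¹' (Set.Iic 1) := by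
      ext w; simp [Set.mem_setOf_eq]
    rw [this]
    exact (isClosed_Iic.preimage (Complex.continuous_re.abs)).inter
      (isClosed_Iic.preimage (Complex.continuous_im.abs))
  have hQ0bdd : Q0 ⊆ Metric.closedBall 0 2 := by
    intro z hz
    rw [hQ0] at hz
    rw [Metric.mem_closedBall, dist_zero_right]
    calc ‖z‖ ≤ |z.re| + |z.im| := Complex.norm_le_abs_re_add_abs_im z
      _ ≤ 2 := by linarith [hz.1, hz.2]
  have hballQ0 : Metric.ball (0:ℂ) 1 ⊆ Q0 := by
    intro z hz
    rw [Metric.mem_ball, dist_zero_right] at hz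
    rw [hQ0]
    exact ⟨le_of_lt (lt_of_le_of_lt (Complex.abs_re_le_norm z) hz),
      le_of_lt (lt_of_le_of_lt (Complex.abs_im_le_norm z) hz)⟩
  -- nonvanishing
  have hne : (π/4 - Sfun j) ≠ 0 := by
    have hSrat : Sfun j = ((∑ m ∈ Finset.range j, (2/(4*(m:ℚ)+2)) * (-1)^m : ℚ) : ℝ) := by
      rw [Sfun]; push_cast; rfl
    intro h
    set q : ℚ := ∑ m ∈ Finset.range j, (2/(4*(m:ℚ)+2)) * (-1)^m with hqdef
    have : π = ((4*q : ℚ):ℝ) := by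
      push_cast
      rw [← hSrat]
      linarith
    exact Rat.not_irrational (4*q) (this ▸ irrational_pi)
  have hnonzero : (∫ w in Q0 \ Metric.ball 0 1, b2j j w ∂volume) ≠ 0 := by
    rw [main_value j hj Q0 hQ0]
    apply mul_ne_zero
    · apply div_ne_zero
      · exact mul_ne_zero two_ne_zero (Nat.cast_ne_zero.2 hj.ne')
      · simpa using hπ.ne'
    · rw [Complex.ofReal_ne_zero]
      exact mul_ne_zero (by norm_num) (div_ne_zero hne (by positivity))
  refine ⟨?_, hnonzero⟩
  have hconst : ∀ᶠ ε in nhdsWithin (0:ℝ) (Set.Ioi 0),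
      (∫ w in Q0 \ Metric.ball 0 ε, b2j j w ∂volume)
        = (∫ w in Q0 \ Metric.ball 0 1, b2j j w ∂volume) := by
    filter_upwards [Ioc_mem_nhdsGT_of_mem (Set.mem_Ico.2 ⟨le_refl 0, one_pos⟩)] with ε hε
    obtain ⟨hε0, hε1⟩ := hε
    have hdecomp : Q0 \ Metric.ball 0 ε
        = (Q0 \ Metric.ball 0 1) ∪ (Metric.ball (0:ℂ) 1 \ Metric.ball 0 ε) := by
      ext z
      simp only [Set.mem_diff, Set.mem_union]
      constructor
      · rintro ⟨hzQ, hz⟩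
        by_cases h1 : z ∈ Metric.ball (0:ℂ) 1
        · exact Or.inr ⟨h1, hz⟩
        · exact Or.inl ⟨hzQ, h1⟩
      · rintro (⟨hzQ, h1⟩ | ⟨h1, hz⟩)
        · exact ⟨hzQ, fun hc => h1 (Metric.ball_subset_ball hε1 hc)⟩
        · exact ⟨hballQ0 h1, hz⟩
    have hdisj : Disjoint (Q0 \ Metric.ball 0 1) (Metric.ball (0:ℂ) 1 \ Metric.ball 0 ε) :=
      Set.disjoint_left.2 fun z hz h2 => hz.2 h2.1
    have hmeas2 : MeasurableSet (Metric.ball (0:ℂ) 1 \ Metric.ball 0 ε) :=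
      Metric.isOpen_ball.measurableSet.diff Metric.isOpen_ball.measurableSet
    have hint1 : IntegrableOn (b2j j) (Q0 \ Metric.ball 0 1) volume := by
      apply integrableOn_b2j_compact j
      · apply Metric.isCompact_of_isClosed_isBounded
        · exact hQ0closed.inter Metric.isOpen_ball.isClosed_compl
        · exact (Metric.isBounded_closedBall).subset
            (le_trans (Set.diff_subset) hQ0bdd)
      · intro h0
        exact h0.2 (Metric.mem_ball_self one_pos)
    have hint2 : IntegrableOn (b2j j) (Metric.ball (0:ℂ) 1 \ Metric.ball 0 ε) volume := by
      apply IntegrableOn.mono_set (t := Metric.closedBall (0:ℂ) 1 \ Metric.ball 0 ε)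
      · apply integrableOn_b2j_compact j
        · exact (isCompact_closedBall 0 1).diff Metric.isOpen_ball
        · intro h0
          exact h0.2 (Metric.mem_ball_self hε0)
      · exact Set.diff_subset_diff_left Metric.ball_subset_closedBall
    rw [hdecomp, MeasureTheory.setIntegral_union hdisj hmeas2 hint1 hint2,
      annulus_zero j hj hε0 hε1, add_zero]
  exact Tendsto.congr' (by filter_upwards [hconst] with ε h using h.symm) tendsto_const_nhds
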